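/- (Entropy decay bound under positive curvature.) Let ε > 0, κ > 0 and t₀ ≥ 0, and let h : ℝ → ℝ be differentiable on [t₀, ∞) with h'(s) ≤ −κ·(ε·h(s) − 1)² for all s ≥ t₀. Then for every t > t₀: h(t) ≤ 1/ε + 1/(ε²·κ·(t − t₀)). -/

import Mathlib

/-- **Entropy decay bound under positive curvature.** If `h` is differentiable on
`[t₀, ∞)` (with `t₀ ≥ 0`) and `h'(s) ≤ −κ·(ε·h(s) − 1)²` there, then for every
`t > t₀`, `h(t) ≤ 1/ε + 1/(ε²·κ·(t − t₀))`. -/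
theorem entropy_decay_positive_curvature
    (ε kap t₀ : ℝ) (hε : 0 < ε) (hkap : 0 < kap) (ht₀ : 0 ≤ t₀)
    (h h' : ℝ → ℝ)
    (hderiv : ∀ s ∈ Set.Ici t₀, HasDerivWithinAt h (h' s) (Set.Ici t₀) s)
    (hineq : ∀ s ∈ Set.Ici t₀, h' s ≤ -kap * (ε * h s - 1) ^ 2) :
    ∀ t : ℝ, t₀ < t → h t ≤ 1 / ε + 1 / (ε ^ 2 * kap * (t - t₀)) := by
  intro t ht
  by_contra hcon
  push_neg at hcon
  -- h is antitone on Ici t₀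
  have hanti : AntitoneOn h (Set.Ici t₀) := by
    apply antitoneOn_of_hasDerivWithinAt_nonpos (convex_Ici t₀)
      (fun s hs => (hderiv s hs).continuousWithinAt)
      (fun s hs => (hderiv s (interior_subset hs)).mono interior_subset)
    intro s hs
    have := hineq s (interior_subset hs)
    nlinarith [sq_nonneg (ε * h s - 1)]
  have htpos : 0 < t - t₀ := by linarith
  have hbound : 1 / ε < h t := by
    have : 0 < 1 / (ε ^ 2 * kap * (t - t₀)) := by positivity
    linarith
  -- on [t₀, t], ε * h s - 1 > 0
  have hA : ∀ s ∈ Set.Icc t₀ t, 0 < ε * h s - 1 := by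
    intro s hs
    have hhs : h t ≤ h s := hanti hs.1 (le_of_lt ht) hs.2
    have : 1 / ε < h s := lt_of_lt_of_le hbound hhs
    rw [div_lt_iff₀ hε] at this
    linarith [this]
  -- the function g s = (ε * (ε * h s - 1))⁻¹ - kap * s is monotone on [t₀, t]
  set g : ℝ → ℝ := fun s => (ε * (ε * h s - 1))⁻¹ - kap * s with hg
  have hIccIci : Set.Icc t₀ t ⊆ Set.Ici t₀ := Set.Icc_subset_Ici_self
  have hgd : ∀ s ∈ Set.Icc t₀ t, HasDerivWithinAt g
      (-(ε * (ε * h' s)) / (ε * (ε * h s - 1)) ^ 2 - kap) (Set.Icc t₀ t) s := by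
    intro s hs
    have h1 : HasDerivWithinAt (fun s => ε * (ε * h s - 1)) (ε * (ε * h' s))
        (Set.Icc t₀ t) s :=
      ((((hderiv s (hIccIci hs)).const_mul ε).sub_const 1).const_mul ε).mono hIccIci
    have hne : ε * (ε * h s - 1) ≠ 0 := by
      have := hA s hs; positivity
    have h2 := h1.inv hne
    have h3 : HasDerivWithinAt (fun s : ℝ => kap * s) kap (Set.Icc t₀ t) s := by
      simpa using (hasDerivWithinAt_id s (Set.Icc t₀ t)).const_mul kap
    exact h2.sub h3
  have hgmono : MonotoneOn g (Set.Icc t₀ t) := by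
    apply monotoneOn_of_hasDerivWithinAt_nonneg (convex_Icc t₀ t)
      (fun s hs => (hgd s hs).continuousWithinAt)
      (fun s hs => (hgd s (interior_subset hs)).mono interior_subset)
    intro s hs
    have hs' : s ∈ Set.Icc t₀ t := interior_subset hs
    have hApos := hA s hs'
    have hi := hineq s (hIccIci hs')
    rw [sub_nonneg, le_div_iff₀ (by positivity)]
    nlinarith [sq_nonneg (ε * h s - 1), hApos, hi]
  -- conclude
  have hmem₀ : t₀ ∈ Set.Icc t₀ t := ⟨le_refl _, le_of_lt ht⟩
  have hmemt : t ∈ Set.Icc t₀ t := ⟨le_of_lt ht, le_refl _⟩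
  have hgle := hgmono hmem₀ hmemt (le_of_lt ht)
  have hA₀ := hA t₀ hmem₀
  have hAt := hA t hmemt
  have hginv₀ : 0 < (ε * (ε * h t₀ - 1))⁻¹ := by positivity
  have key : kap * (t - t₀) < (ε * (ε * h t - 1))⁻¹ := by
    simp only [hg] at hgle
    have : kap * t - kap * t₀ < (ε * (ε * h t - 1))⁻¹ := by linarith
    linarith [this, mul_sub kap t t₀]
  -- key : kap * (t - t₀) < 1 / (ε * (ε * h t - 1))
  rw [lt_inv_comm₀ (by positivity) (by positivity)] at key
  -- key : ε * (ε * h t - 1) < 1 / (kap * (t - t₀))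
  have key' : ε * (ε * h t - 1) * (kap * (t - t₀)) < 1 :=
    (lt_div_iff₀ (by positivity : (0:ℝ) < kap * (t - t₀))).mp (by simpa [one_div] using key)
  have : h t < 1 / ε + 1 / (ε ^ 2 * kap * (t - t₀)) := by
    rw [div_add_div _ _ (ne_of_gt hε) (by positivity), lt_div_iff₀ (by positivity)]
    nlinarith
  linarith
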